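/- Let D = (V, E, w) be a vertex-weighted oriented graph, and let z be a leaf of D whose only incident edge is (y,z) (so N_D^-(z) = {y}). Then for every integer t ≥ 2, the ideals ((I(D)^t : x_z^{w(z)}), x_y), ((I(D∖y)^t : x_z^{w(z)}), x_y) and (I(D∖y)^t, x_y) of S all coincide. -/

import Mathlib

open MvPolynomial


lemma my_sup_pow_le {R : Type*} [CommRing R] (P Q : Ideal R) : ∀ t : ℕ, (P ⊔ Q) ^ t ≤ P ^ t ⊔ Q
  | 0 => by simp
  | (n+1) => by
    rw [pow_succ, pow_succ]
    calc (P ⊔ Q) ^ n * (P ⊔ Q) ≤ (P ^ n ⊔ Q) * (P ⊔ Q) :=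
          Ideal.mul_mono (my_sup_pow_le P Q n) le_rfl
      _ = P ^ n * P ⊔ P ^ n * Q ⊔ (Q * P ⊔ Q * Q) := by
          rw [Ideal.sup_mul, Ideal.mul_sup, Ideal.mul_sup]
      _ ≤ P ^ n * P ⊔ Q := by
          refine sup_le (sup_le le_sup_left (le_sup_right.trans' Ideal.mul_le_right))
            (sup_le (le_sup_right.trans' Ideal.mul_le_left)
              (le_sup_right.trans' Ideal.mul_le_right))

lemma my_sat {k : Type} [Field k] {V : Type} [DecidableEq V] (z y : V) (hyz : y ≠ z)
    (G : Set (MvPolynomial V k))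
    (hG : ∀ p ∈ G, ∃ a b : V, a ≠ z ∧ b ≠ z ∧ ∃ m : ℕ, p = X a * X b ^ m)
    (t n : ℕ) (g : MvPolynomial V k)
    (hg : g * X z ^ n ∈ Ideal.span G ^ t ⊔ Ideal.span {X y}) :
    g ∈ Ideal.span G ^ t ⊔ Ideal.span {X y} := by
  classical
  set W := {v : V // v ≠ z}
  set eV : V ≃ Option W := (Equiv.optionSubtypeNe z).symm with heV
  set φa : MvPolynomial V k ≃ₐ[k] Polynomial (MvPolynomial W k) :=
    (renameEquiv k eV).trans (optionEquivLeft k W) with hφa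
  set φ : MvPolynomial V k ≃+* Polynomial (MvPolynomial W k) := φa.toRingEquiv with hφ
  have happ : ∀ p, φ p = (optionEquivLeft k W) (rename eV p) := fun p => rfl
  have hφX : ∀ (v : V) (h : v ≠ z), φ (X v) = Polynomial.C (X (⟨v, h⟩ : W)) := by
    intro v h
    rw [happ, rename_X, heV]
    rw [Equiv.optionSubtypeNe_symm_of_ne h, optionEquivLeft_X_some]
  have hφz : φ (X z) = Polynomial.X := by
    rw [happ, rename_X, heV, Equiv.optionSubtypeNe_symm_self, optionEquivLeft_X_none]
  set φr : MvPolynomial V k →+* Polynomial (MvPolynomial W k) := φ.toRingHom with hφr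
  have hφrapp : ∀ p, φr p = φ p := fun _ => rfl
  have hrange : ∀ p ∈ G, φr p ∈ Set.range (Polynomial.C (R := MvPolynomial W k)) := by
    intro p hp
    obtain ⟨a, b, ha, hb, m, rfl⟩ := hG p hp
    refine ⟨X ⟨a, ha⟩ * X ⟨b, hb⟩ ^ m, ?_⟩
    simp only [hφrapp, map_mul, map_pow, hφX a ha, hφX b hb]
  obtain ⟨B₁, hB₁⟩ : ∃ B₁, Ideal.map φr (Ideal.span G) = Ideal.map Polynomial.C B₁ := by
    refine ⟨Ideal.span (Polynomial.C ⁻¹' (φr '' G)), ?_⟩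
    rw [Ideal.map_span, Ideal.map_span, Set.image_preimage_eq_of_subset]
    rintro _ ⟨p, hp, rfl⟩; exact hrange p hp
  have hmapY : Ideal.map φr (Ideal.span {X y})
      = Ideal.map Polynomial.C (Ideal.span {X (⟨y, hyz⟩ : W)}) := by
    rw [Ideal.map_span, Ideal.map_span, Set.image_singleton, Set.image_singleton]
    rw [hφrapp, hφX y hyz]
  set B₀ : Ideal (MvPolynomial W k) := B₁ ^ t ⊔ Ideal.span {X (⟨y, hyz⟩ : W)} with hB₀
  have hmapA : Ideal.map φr (Ideal.span G ^ t ⊔ Ideal.span {X y})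
      = Ideal.map Polynomial.C B₀ := by
    rw [Ideal.map_sup, Ideal.map_pow, hB₁, hmapY, hB₀, Ideal.map_sup, Ideal.map_pow]
  have h1 : φr (g * X z ^ n)
      ∈ Ideal.map φr (Ideal.span G ^ t ⊔ Ideal.span {X y}) :=
    Ideal.mem_map_of_mem _ hg
  rw [hmapA] at h1
  rw [hφrapp, map_mul, map_pow, hφz] at h1
  have h2 : φ g ∈ Ideal.map Polynomial.C B₀ := by
    rw [Ideal.mem_map_C_iff] at h1 ⊢
    intro m
    simpa [Polynomial.coeff_mul_X_pow] using h1 (m + n)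
  rw [← hmapA] at h2
  have h3 := Ideal.mem_map_of_mem (φ.symm : Polynomial (MvPolynomial W k) →+* MvPolynomial V k) h2
  rw [Ideal.map_map] at h3
  have hcomp : ((φ.symm : Polynomial (MvPolynomial W k) →+* MvPolynomial V k)).comp φr
      = RingHom.id _ := RingHom.ext fun x => by
        rw [RingHom.comp_apply, hφrapp]; exact φ.symm_apply_apply x
  rw [hcomp, Ideal.map_id] at h3
  simpa using h3

/-- The edge ideal of a vertex-weighted oriented graph with edge set `E` and
weight function `w`. -/
noncomputable def edgeIdeal (k : Type*) [Field k] {V : Type*} (E : Finset (V × V))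
    (w : V → ℕ) : Ideal (MvPolynomial V k) :=
  Ideal.span ((fun e : V × V => X e.1 * X e.2 ^ w e.2) '' (E : Set (V × V)))

/-- **Lemma.** Let `D` be a vertex-weighted oriented graph and `z` a leaf whose only
incident edge is `(y, z)`.  Then for all `t ≥ 2`,
`((I(D)^t : x_z^{w_z}), x_y) = ((I(D \ y)^t : x_z^{w_z}), x_y) = (I(D \ y)^t, x_y)`. -/
theorem pow_edgeIdeal_colon_leafPow_sup
    (k : Type) [Field k] (V : Type) [DecidableEq V]
    (E : Finset (V × V)) (w : V → ℕ)
    (hw : ∀ v : V, 1 ≤ w v)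
    (hloop : ∀ e ∈ E, e.1 ≠ e.2)
    (y z : V) (hyz : (y, z) ∈ E)
    (hleaf : ∀ e ∈ E, (e.1 = z ∨ e.2 = z) → e = (y, z))
    (t : ℕ) (ht : 2 ≤ t) :
    ((edgeIdeal k E w) ^ t).colon (Ideal.span {(X z : MvPolynomial V k) ^ w z})
        ⊔ Ideal.span {(X y : MvPolynomial V k)}
      = ((edgeIdeal k (E.filter (fun e => e.1 ≠ y ∧ e.2 ≠ y)) w) ^ t).colon
            (Ideal.span {(X z : MvPolynomial V k) ^ w z})
          ⊔ Ideal.span {(X y : MvPolynomial V k)}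
    ∧ ((edgeIdeal k (E.filter (fun e => e.1 ≠ y ∧ e.2 ≠ y)) w) ^ t).colon
            (Ideal.span {(X z : MvPolynomial V k) ^ w z})
          ⊔ Ideal.span {(X y : MvPolynomial V k)}
      = (edgeIdeal k (E.filter (fun e => e.1 ≠ y ∧ e.2 ≠ y)) w) ^ t
          ⊔ Ideal.span {(X y : MvPolynomial V k)} := by
  classical
  have hyzne : y ≠ z := hloop _ hyz
  set E' : Finset (V × V) := E.filter (fun e => e.1 ≠ y ∧ e.2 ≠ y) with hE'
  set G : Set (MvPolynomial V k) :=
    (fun e : V × V => X e.1 * X e.2 ^ w e.2) '' (E' : Set (V × V)) with hG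
  set J : Ideal (MvPolynomial V k) := edgeIdeal k E' w with hJdef
  set I : Ideal (MvPolynomial V k) := edgeIdeal k E w with hIdef
  set Y : Ideal (MvPolynomial V k) := Ideal.span {X y} with hYdef
  set F : Ideal (MvPolynomial V k) := Ideal.span {(X z : MvPolynomial V k) ^ w z} with hFdef
  have hJG : J = Ideal.span G := rfl
  -- edges of E' avoid z
  have hGprop : ∀ p ∈ G, ∃ a b : V, a ≠ z ∧ b ≠ z ∧ ∃ m : ℕ, p = X a * X b ^ m := by
    rintro p ⟨e, he, rfl⟩
    have he' : e ∈ E' := he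
    rw [hE', Finset.mem_filter] at he'
    refine ⟨e.1, e.2, ?_, ?_, w e.2, rfl⟩
    · intro h
      exact he'.2.1 (by rw [hleaf e he'.1 (Or.inl h)])
    · intro h
      exact he'.2.1 (by rw [hleaf e he'.1 (Or.inr h)])
  -- J ≤ I
  have hJI : J ≤ I := by
    rw [hJdef, hIdef, edgeIdeal, edgeIdeal]
    exact Ideal.span_mono (Set.image_mono (by exact_mod_cast Finset.filter_subset _ E))
  -- I ≤ J ⊔ Y
  have hIsub : I ≤ J ⊔ Y := by
    rw [hIdef, edgeIdeal, Ideal.span_le]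
    rintro _ ⟨e, he, rfl⟩
    by_cases h1 : e.1 = y
    · apply Ideal.mem_sup_right
      rw [hYdef, Ideal.mem_span_singleton]
      exact Dvd.dvd.mul_right (by rw [h1]) _
    · by_cases h2 : e.2 = y
      · apply Ideal.mem_sup_right
        rw [hYdef, Ideal.mem_span_singleton]
        refine Dvd.dvd.mul_left ?_ _
        rw [h2]
        exact dvd_pow_self (X y) (Nat.one_le_iff_ne_zero.1 (hw y))
      · apply Ideal.mem_sup_left
        rw [hJdef, edgeIdeal]
        exact Ideal.subset_span ⟨e, Finset.mem_coe.2 (Finset.mem_filter.2 ⟨he, h1, h2⟩), rfl⟩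
  -- I^t ≤ J^t ⊔ Y
  have hIt : I ^ t ≤ J ^ t ⊔ Y :=
    (Ideal.pow_right_mono hIsub t).trans (my_sup_pow_le J Y t)
  -- J^t ≤ (J^t).colon F  (and likewise for any ideal)
  have hcolon_self : ∀ P : Ideal (MvPolynomial V k), P ≤ P.colon F := by
    intro P x hx
    rw [hFdef, Ideal.mem_colon_span_singleton]
    exact Ideal.mul_mem_right _ _ hx
  -- saturation of J^t ⊔ Y
  have hsat : (J ^ t ⊔ Y).colon F = J ^ t ⊔ Y := by
    apply le_antisymm
    · intro g hg
      rw [hFdef, Ideal.mem_colon_span_singleton] at hg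
      rw [hJG, hYdef] at hg ⊢
      exact my_sat z y hyzne G hGprop t (w z) g hg
    · exact hcolon_self _
  constructor
  · apply le_antisymm
    · refine sup_le ?_ le_sup_right
      have h1 : (I ^ t).colon F ≤ (J ^ t ⊔ Y).colon F :=
        Submodule.colon_mono hIt le_rfl
      refine (h1.trans hsat.le).trans (sup_le ?_ le_sup_right)
      exact (hcolon_self (J ^ t)).trans le_sup_left
    · exact sup_le_sup_right
        (Submodule.colon_mono (Ideal.pow_right_mono hJI t) le_rfl) _
  · apply le_antisymm
    · refine sup_le ?_ le_sup_right
      have h1 : (J ^ t).colon F ≤ (J ^ t ⊔ Y).colon F :=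
        Submodule.colon_mono le_sup_left le_rfl
      exact h1.trans hsat.le
    · exact sup_le_sup_right (hcolon_self (J ^ t)) _
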